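/- Fix n ≥ 1, let R be a commutative ring, and let β₁,…,βₙ ∈ R. Work in R[z₁,…,zₙ]. For each index i set c(i,0) = zᵢ⁵, c(i,1) = (1+βᵢ) zᵢ⁴, c(i,2) = (1+βᵢ) zᵢ³. Then the sum, over all weakly increasing functions v : {0,…,n} → ℤ with v(0)=0, v(n)=3 and v(i)−v(i−1) ≤ 2 for all i, of the products ∏_{i=1}^{n} c(i, v(i)−v(i−1)), equals ∑_{(j,k), j≠k} (1+β_j)(1+β_k) z_j³ z_k⁴ ∏_{l∉{j,k}} z_l⁵ + ∑_{{i,j,k} a 3-element subset of {1,…,n}} (1+β_i)(1+β_j)(1+β_k) z_i⁴ z_j⁴ z_k⁴ ∏_{l∉{i,j,k}} z_l⁵. (This is the multidegree of the multi-image variety of congruences C₁,…,Cₙ of bidegrees (1,βᵢ).) -/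

import Mathlib

open MvPolynomial Finset

section Aux
variable {n : ℕ}

def cumGap (d : Fin n → ℤ) (m : Fin (n + 1)) : ℤ :=
  ∑ i ∈ Finset.univ.filter (fun i : Fin n => (i : ℕ) < (m : ℕ)), d i

lemma cumGap_zero (d : Fin n → ℤ) : cumGap d 0 = 0 := by
  simp [cumGap]

lemma cumGap_step (d : Fin n → ℤ) (i : Fin n) :
    cumGap d i.succ = cumGap d i.castSucc + d i := by
  unfold cumGap
  have h : Finset.univ.filter (fun l : Fin n => (l : ℕ) < ((i.succ : Fin (n+1)) : ℕ)) =
      insert i (Finset.univ.filter (fun l : Fin n => (l : ℕ) < ((i.castSucc : Fin (n+1)) : ℕ))) := by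
    ext l
    simp [Fin.ext_iff]
    omega
  rw [h, Finset.sum_insert (by simp)]
  ring

lemma cumGap_diff (d : Fin n → ℤ) (i : Fin n) :
    cumGap d i.succ - cumGap d i.castSucc = d i := by
  rw [cumGap_step]; ring

lemma cumGap_last (d : Fin n → ℤ) : cumGap d (Fin.last n) = ∑ i, d i := by
  unfold cumGap
  rw [Finset.filter_true_of_mem]
  intro l _
  simpa using l.isLt

lemma cumGap_mono {d : Fin n → ℤ} (hd : ∀ i, 0 ≤ d i) : Monotone (cumGap d) := by
  intro a b hab
  apply Finset.sum_le_sum_of_subset_of_nonneg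
  · intro l hl
    simp only [Finset.mem_filter, Finset.mem_univ, true_and] at *
    exact lt_of_lt_of_le hl hab
  · exact fun i _ _ => hd i

lemma eq_cumGap (v : Fin (n+1) → ℤ) (h0 : v 0 = 0) :
    v = cumGap (fun i => v i.succ - v i.castSucc) := by
  funext m
  induction m using Fin.induction with
  | zero => rw [h0, cumGap_zero]
  | succ i ih => rw [cumGap_step, ← ih]; ring

/-- increment pattern of a gap sequence -/
def patD : (Fin n × Fin n) ⊕ Finset (Fin n) → Fin n → ℤ
  | Sum.inl p, i => if i = p.1 then 2 else if i = p.2 then 1 else 0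
  | Sum.inr s, i => if i ∈ s then 1 else 0

lemma patD_nonneg (x : (Fin n × Fin n) ⊕ Finset (Fin n)) (i : Fin n) : 0 ≤ patD x i := by
  cases x <;> simp only [patD] <;> split_ifs <;> norm_num

lemma patD_le_two (x : (Fin n × Fin n) ⊕ Finset (Fin n)) (i : Fin n) : patD x i ≤ 2 := by
  cases x <;> simp only [patD] <;> split_ifs <;> norm_num

lemma sum_patD_inl {p : Fin n × Fin n} (hp : p.1 ≠ p.2) :
    ∑ i, patD (Sum.inl p) i = 3 := by
  have : ∀ i, patD (Sum.inl p) i =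
      (if i = p.1 then (2:ℤ) else 0) + (if i = p.2 then 1 else 0) := by
    intro i
    simp only [patD]
    split_ifs with h1 h2 <;> first | rfl | (exfalso; exact hp (h1 ▸ h2 ▸ rfl)) | ring
  rw [Finset.sum_congr rfl fun i _ => this i, Finset.sum_add_distrib]
  simp

lemma sum_patD_inr {s : Finset (Fin n)} (hs : s.card = 3) :
    ∑ i, patD (Sum.inr s) i = 3 := by
  simp only [patD]
  rw [Finset.sum_ite_mem]
  simp [hs]

end Aux

section Main
variable {n : ℕ}

lemma patD_classify {d : Fin n → ℤ} (h0 : ∀ i, 0 ≤ d i) (h2 : ∀ i, d i ≤ 2)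
    (hs : ∑ i, d i = 3) :
    ∃ x ∈ (Finset.univ.filter (fun p : Fin n × Fin n => p.1 ≠ p.2)).disjSum
      (Finset.univ.powersetCard 3), patD x = d := by
  classical
  set s1 := Finset.univ.filter (fun i => d i = 1) with hs1
  set s2 := Finset.univ.filter (fun i => d i = 2) with hs2
  have key : (s1.card : ℤ) + 2 * s2.card = 3 := by
    have hterm : ∀ i : Fin n, d i =
        (if d i = 1 then (1:ℤ) else 0) + (if d i = 2 then 2 else 0) := by
      intro i
      have := h0 i; have := h2 i
      split_ifs <;> omega
    have hsum := Finset.sum_congr rfl (fun i (_ : i ∈ Finset.univ) => hterm i)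
    rw [hs, Finset.sum_add_distrib] at hsum
    have e1 : (∑ x : Fin n, if d x = 1 then (1:ℤ) else 0) = (s1.card : ℤ) := by
      rw [hs1, Finset.sum_boole]
    have e2 : (∑ x : Fin n, if d x = 2 then (2:ℤ) else 0) = 2 * (s2.card : ℤ) := by
      have : ∀ x : Fin n, (if d x = 2 then (2:ℤ) else 0) = 2 * (if d x = 2 then 1 else 0) := by
        intro x; split_ifs <;> ring
      rw [Finset.sum_congr rfl fun x _ => this x, ← Finset.mul_sum, hs2, Finset.sum_boole]
    rw [e1, e2] at hsum
    omega
  have hd_mem : ∀ i, d i = 0 ∨ d i = 1 ∨ d i = 2 := by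
    intro i; have := h0 i; have := h2 i; omega
  by_cases hc : s2.card = 1
  · -- one jump of 2, one of 1
    have hc1 : s1.card = 1 := by omega
    obtain ⟨j, hj⟩ := Finset.card_eq_one.mp hc
    obtain ⟨k, hk⟩ := Finset.card_eq_one.mp hc1
    have hdj : d j = 2 := by
      have : j ∈ s2 := hj ▸ Finset.mem_singleton_self j
      simpa [hs2] using this
    have hdk : d k = 1 := by
      have : k ∈ s1 := hk ▸ Finset.mem_singleton_self k
      simpa [hs1] using this
    have hjk : j ≠ k := fun h => by rw [h, hdk] at hdj; norm_num at hdj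
    refine ⟨Sum.inl (j, k), ?_, ?_⟩
    · simp [Finset.inl_mem_disjSum, hjk]
    · funext i
      simp only [patD]
      by_cases hij : i = j
      · simp [hij, hdj]
      · by_cases hik : i = k
        · simp [hik, hdk, Ne.symm hjk]
        · have hn1 : d i ≠ 1 := by
            intro h
            have : i ∈ s1 := by simp [hs1, h]
            rw [hk] at this; exact hik (Finset.mem_singleton.mp this)
          have hn2 : d i ≠ 2 := by
            intro h
            have : i ∈ s2 := by simp [hs2, h]
            rw [hj] at this; exact hij (Finset.mem_singleton.mp this)
          have : d i = 0 := by rcases hd_mem i with h|h|h <;> tauto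
          simp [hij, hik, this]
  · -- three jumps of 1
    have hc2 : s2.card = 0 := by
      by_contra hne
      have : 2 ≤ s2.card := by omega
      omega
    have hc3 : s1.card = 3 := by omega
    have hnot2 : ∀ i, d i ≠ 2 := by
      intro i h
      have : i ∈ s2 := by simp [hs2, h]
      rw [Finset.card_eq_zero.mp hc2] at this
      exact absurd this (Finset.notMem_empty i)
    refine ⟨Sum.inr s1, ?_, ?_⟩
    · simp [Finset.inr_mem_disjSum, Finset.mem_powersetCard_univ, hc3]
    · funext i
      simp only [patD]
      by_cases hi : i ∈ s1
      · have : d i = 1 := by simpa [hs1] using hi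
        simp [hi, this]
      · have hn1 : d i ≠ 1 := fun h => hi (by simp [hs1, h])
        have : d i = 0 := by rcases hd_mem i with h|h|h <;> [exact h; tauto; exact absurd h (hnot2 i)]
        simp [hi, this]

end Main

lemma patD_inj {n : ℕ} {x y : (Fin n × Fin n) ⊕ Finset (Fin n)}
    (hx : x ∈ (Finset.univ.filter (fun p : Fin n × Fin n => p.1 ≠ p.2)).disjSum
      (Finset.univ.powersetCard 3))
    (hy : y ∈ (Finset.univ.filter (fun p : Fin n × Fin n => p.1 ≠ p.2)).disjSum
      (Finset.univ.powersetCard 3))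
    (h : patD x = patD y) : x = y := by
  classical
  cases x with
  | inl p =>
    rw [Finset.inl_mem_disjSum, Finset.mem_filter] at hx
    cases y with
    | inl q =>
      rw [Finset.inl_mem_disjSum, Finset.mem_filter] at hy
      have e1 : p.1 = q.1 := by
        by_contra hne
        have h1 := congrFun h p.1
        simp only [patD, if_pos rfl, if_neg hne] at h1
        split_ifs at h1 <;> norm_num at h1
      have e2 : p.2 = q.2 := by
        by_contra hne
        have h2 := congrFun h p.2
        simp only [patD, if_neg (Ne.symm hx.2), if_pos rfl, if_neg hne] at h2
        split_ifs at h2 <;> norm_num at h2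
      exact congrArg Sum.inl (Prod.ext e1 e2)
    | inr t =>
      exfalso
      have h1 := congrFun h p.1
      simp only [patD, if_pos rfl] at h1
      split_ifs at h1 <;> norm_num at h1
  | inr s =>
    cases y with
    | inl q =>
      exfalso
      have h1 := congrFun h q.1
      simp only [patD, if_pos rfl] at h1
      split_ifs at h1 <;> norm_num at h1
    | inr t =>
      congr 1
      ext i
      have hi := congrFun h i
      simp only [patD] at hi
      split_ifs at hi with h1 h2 <;> first | tauto | norm_num at hi

/-- The multidegree of the multi-image variety of congruences `C₁,…,Cₙ` of
bidegrees `(1, βᵢ)`: summing, over all gap sequences `v`, the products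
`∏ᵢ c(i, v i − v (i-1))` where `c(i,0) = zᵢ⁵`, `c(i,1) = (1+βᵢ) zᵢ⁴`,
`c(i,2) = (1+βᵢ) zᵢ³`, yields
`∑_{(j,k), j≠k} (1+β_j)(1+β_k) z_j³ z_k⁴ ∏_{l∉{j,k}} z_l⁵
 + ∑_{{i,j,k}} (1+β_i)(1+β_j)(1+β_k) z_i⁴ z_j⁴ z_k⁴ ∏_{l∉{i,j,k}} z_l⁵`. -/
theorem multidegree_multi_image (n : ℕ) (hn : 1 ≤ n)
    {R : Type*} [CommRing R] (β : Fin n → R)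
    (c : Fin n → ℤ → MvPolynomial (Fin n) R)
    (hc0 : ∀ i, c i 0 = X i ^ 5)
    (hc1 : ∀ i, c i 1 = C (1 + β i) * X i ^ 4)
    (hc2 : ∀ i, c i 2 = C (1 + β i) * X i ^ 3) :
    (∑ᶠ v ∈ {v : Fin (n + 1) → ℤ | Monotone v ∧ v 0 = 0 ∧ v (Fin.last n) = 3 ∧
        ∀ i : Fin n, v i.succ - v i.castSucc ≤ 2},
      ∏ i : Fin n, c i (v i.succ - v i.castSucc))
    = (∑ p ∈ Finset.univ.filter (fun p : Fin n × Fin n => p.1 ≠ p.2),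
        C ((1 + β p.1) * (1 + β p.2)) * X p.1 ^ 3 * X p.2 ^ 4 *
          ∏ l ∈ ({p.1, p.2} : Finset (Fin n))ᶜ, X l ^ 5)
      + (∑ s ∈ Finset.univ.powersetCard 3,
        (∏ i ∈ s, C (1 + β i) * X i ^ 4) * ∏ l ∈ sᶜ, X l ^ 5) := by
  classical
  have hset : {v : Fin (n + 1) → ℤ | Monotone v ∧ v 0 = 0 ∧ v (Fin.last n) = 3 ∧
      ∀ i : Fin n, v i.succ - v i.castSucc ≤ 2} =
      ↑(((Finset.univ.filter (fun p : Fin n × Fin n => p.1 ≠ p.2)).disjSum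
        (Finset.univ.powersetCard 3)).image (fun x => cumGap (patD x))) := by
    ext v
    simp only [Set.mem_setOf_eq, Finset.coe_image, Set.mem_image, Finset.mem_coe]
    constructor
    · rintro ⟨hmono, h0, hlast, hdiff⟩
      have hv := eq_cumGap v h0
      set d := fun i : Fin n => v i.succ - v i.castSucc with hd
      have hd0 : ∀ i, 0 ≤ d i := fun i =>
        sub_nonneg.2 (hmono (Fin.castSucc_lt_succ (i := i)).le)
      have hsum : ∑ i, d i = 3 := by
        rw [← cumGap_last d, ← hv]
        exact hlast
      obtain ⟨x, hxP, hxd⟩ := patD_classify hd0 hdiff hsum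
      exact ⟨x, hxP, by rw [hxd, ← hv]⟩
    · rintro ⟨x, hxP, rfl⟩
      have hsum3 : ∑ i, patD x i = 3 := by
        cases x with
        | inl p =>
          rw [Finset.inl_mem_disjSum, Finset.mem_filter] at hxP
          exact sum_patD_inl hxP.2
        | inr s =>
          rw [Finset.inr_mem_disjSum, Finset.mem_powersetCard_univ] at hxP
          exact sum_patD_inr hxP
      exact ⟨cumGap_mono (patD_nonneg x), cumGap_zero _,
        by rw [cumGap_last]; exact hsum3,
        fun i => by rw [cumGap_diff]; exact patD_le_two x i⟩
  rw [hset, finsum_mem_coe_finset,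
    Finset.sum_image (fun x hx y hy hxy => patD_inj hx hy
      (funext fun i => by
        rw [← cumGap_diff (patD x) i, ← cumGap_diff (patD y) i, hxy])),
    Finset.sum_disjSum]
  simp only [cumGap_diff]
  congr 1
  · apply Finset.sum_congr rfl
    intro p hp
    rw [Finset.mem_filter] at hp
    have hne : p.1 ≠ p.2 := hp.2
    rw [← Finset.prod_mul_prod_compl ({p.1, p.2} : Finset (Fin n))]
    have h1 : ∏ i ∈ ({p.1, p.2} : Finset (Fin n)), c i (patD (Sum.inl p) i)
        = (C (1 + β p.1) * X p.1 ^ 3) * (C (1 + β p.2) * X p.2 ^ 4) := by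
      rw [Finset.prod_pair hne]
      have e1 : patD (Sum.inl p) p.1 = 2 := by simp [patD]
      have e2 : patD (Sum.inl p) p.2 = 1 := by simp [patD, Ne.symm hne]
      rw [e1, e2, hc2, hc1]
    have h2 : ∏ i ∈ ({p.1, p.2} : Finset (Fin n))ᶜ, c i (patD (Sum.inl p) i)
        = ∏ l ∈ ({p.1, p.2} : Finset (Fin n))ᶜ, X l ^ 5 := by
      apply Finset.prod_congr rfl
      intro l hl
      simp only [Finset.mem_compl, Finset.mem_insert, Finset.mem_singleton, not_or] at hl
      have : patD (Sum.inl p) l = 0 := by simp [patD, hl.1, hl.2]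
      rw [this, hc0]
    rw [h1, h2, map_mul]
    ring
  · apply Finset.sum_congr rfl
    intro s _
    rw [← Finset.prod_mul_prod_compl s]
    congr 1
    · apply Finset.prod_congr rfl
      intro i hi
      have : patD (Sum.inr s) i = 1 := by simp [patD, hi]
      rw [this, hc1]
    · apply Finset.prod_congr rfl
      intro l hl
      rw [Finset.mem_compl] at hl
      have : patD (Sum.inr s) l = 0 := by simp [patD, hl]
      rw [this, hc0]
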